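/- Let T be an ergodic unitary Koopman operator on L²(μ) of a probability-measure-preserving automorphism, and suppose that for some sequence k_i → ∞ and some a ∈ (0,1), T^{k_i} converges in the weak operator topology to aI + (1−a)T. Then T is weakly mixing, i.e. T has no eigenfunctions other than constants. -/

import Mathlib

open MeasureTheory Filter

lemma aux_lam_eq_one (lam : ℂ) (hl : ‖lam‖ = 1) (a : ℝ) (h0 : 0 < a) (h1 : a < 1)
    (h : ‖(a : ℂ) + ((1 - a : ℝ) : ℂ) * lam‖ = 1) : lam = 1 := by
  have h2 : ‖(a : ℂ) + ((1 - a : ℝ) : ℂ) * lam‖ ^ 2 = 1 := by rw [h]; norm_num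
  have hl2 : ‖lam‖ ^ 2 = 1 := by rw [hl]; norm_num
  rw [Complex.sq_norm] at h2 hl2
  simp [Complex.normSq_apply, Complex.add_re, Complex.add_im, Complex.mul_re,
    Complex.mul_im, Complex.ofReal_re, Complex.ofReal_im] at h2 hl2
  have hre : lam.re = 1 := by nlinarith [mul_pos h0 (by linarith : (0:ℝ) < 1 - a), sq_nonneg lam.im, sq_nonneg (lam.re - 1)]
  have him : lam.im = 0 := by nlinarith
  exact Complex.ext (by simp [hre]) (by simp [him])

/-- If `T` is the ergodic unitary Koopman operator of a probability-measure-preserving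
automorphism and, for some sequence `k_i → ∞` and some `a ∈ (0,1)`,
`T^{k_i} → aI + (1−a)T` in the weak operator topology, then `T` is weakly mixing:
every eigenfunction of `T` is constant. -/
theorem stmt9 {X : Type*} [MeasurableSpace X] (μ : Measure X) [IsProbabilityMeasure μ]
    (T : Lp ℂ 2 μ ≃ₗᵢ[ℂ] Lp ℂ 2 μ)
    (hT1 : T (Lp.const 2 μ (1 : ℂ)) = Lp.const 2 μ (1 : ℂ))
    (herg : ∀ f : Lp ℂ 2 μ, T f = f → ∃ c : ℂ, f = c • (Lp.const 2 μ (1 : ℂ)))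
    (k : ℕ → ℕ) (hk : Tendsto k atTop atTop)
    (a : ℝ) (ha0 : 0 < a) (ha1 : a < 1)
    (hweak : ∀ f g : Lp ℂ 2 μ,
      Tendsto (fun i => (inner ℂ ((T ^ k i) f) g : ℂ)) atTop
        (nhds (inner ℂ ((a : ℂ) • f + ((1 - a : ℝ) : ℂ) • T f) g))) :
    ∀ (lam : ℂ) (f : Lp ℂ 2 μ), T f = lam • f → ∃ c : ℂ, f = c • (Lp.const 2 μ (1 : ℂ)) := by
  intro lam f hf
  by_cases hf0 : f = 0
  · exact ⟨0, by simp [hf0]⟩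
  -- norm of lam is 1
  have hnf : ‖f‖ ≠ 0 := norm_ne_zero_iff.mpr hf0
  have hlam : ‖lam‖ = 1 := by
    have := T.norm_map f
    rw [hf, norm_smul] at this
    field_simp at this
    exact this
  -- T^n f = lam^n • f
  have hpow : ∀ n : ℕ, (T ^ n) f = lam ^ n • f := by
    intro n
    induction n with
    | zero => simp
    | succ n ih =>
      rw [pow_succ, LinearIsometryEquiv.coe_mul, Function.comp_apply, hf, _root_.map_smul, ih,
        smul_smul, pow_succ, mul_comm]
  have hc : (inner ℂ f f : ℂ) ≠ 0 := by
    simpa [inner_self_eq_norm_sq_to_K] using hf0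
  have h1 := hweak f f
  have h1' : Tendsto (fun i => (starRingEnd ℂ) (lam ^ k i) * (inner ℂ f f : ℂ)) atTop
      (nhds ((starRingEnd ℂ) ((a : ℂ) + ((1 - a : ℝ) : ℂ) * lam) * (inner ℂ f f : ℂ))) := by
    convert h1 using 2 with i
    · rw [hpow, inner_smul_left]
    · rw [hf, inner_add_left, inner_smul_left, inner_smul_left, inner_smul_left, map_add,
        map_mul]
      ring
  have h2 : Tendsto (fun i => (starRingEnd ℂ) (lam ^ k i)) atTop
      (nhds ((starRingEnd ℂ) ((a : ℂ) + ((1 - a : ℝ) : ℂ) * lam))) := by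
    have := h1'.mul_const (inner ℂ f f : ℂ)⁻¹
    simp only [mul_assoc, mul_inv_cancel₀ hc, mul_one] at this
    simpa using this
  have hnorm : ‖(a : ℂ) + ((1 - a : ℝ) : ℂ) * lam‖ = 1 := by
    have h3 : Tendsto (fun i => ‖(starRingEnd ℂ) (lam ^ k i)‖) atTop
        (nhds ‖(starRingEnd ℂ) ((a : ℂ) + ((1 - a : ℝ) : ℂ) * lam)‖) := h2.norm
    have h4 : (fun i => ‖(starRingEnd ℂ) (lam ^ k i)‖) = fun _ => (1 : ℝ) := by
      funext i
      simp [norm_pow, hlam]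
    rw [h4] at h3
    have := tendsto_nhds_unique h3 tendsto_const_nhds
    rwa [RCLike.norm_conj] at this
  have hlam1 : lam = 1 := aux_lam_eq_one lam hlam a ha0 ha1 hnorm
  exact herg f (by rw [hf, hlam1, one_smul])
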